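/- Let T(λ, ξ) := (ξ²/(λ + ξ²))^{λ + ξ²} · e^{λ} for λ > 0, ξ > 0. Then 0 < T(λ, ξ) ≤ 1, and T(λ, ξ) is monotonically increasing in ξ for fixed λ. -/

import Mathlib

open Real

private lemma g_hasDeriv (lam : ℝ) {x : ℝ} (hx : 0 < x) (hlx : 0 < lam + x) :
    HasDerivAt (fun x : ℝ => (lam + x) * (Real.log x - Real.log (lam + x)))
      ((Real.log x - Real.log (lam + x)) + (lam + x) * (1 / x - 1 / (lam + x))) x := by
  have h1 : HasDerivAt (fun x : ℝ => lam + x) 1 x := by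
    simpa using (hasDerivAt_id x).const_add lam
  have h2 : HasDerivAt (fun x : ℝ => Real.log x - Real.log (lam + x))
      (1 / x - 1 / (lam + x)) x := by
    have ha : HasDerivAt Real.log (1 / x) x := by
      simpa [one_div] using Real.hasDerivAt_log hx.ne'
    have hb : HasDerivAt (fun x : ℝ => Real.log (lam + x)) (1 / (lam + x)) x := by
      have := (Real.hasDerivAt_log hlx.ne').comp x h1
      exact this.congr_deriv (by simp [one_div])
    exact ha.sub hb
  exact (h1.mul h2).congr_deriv (by ring)

private lemma g_mono (lam : ℝ) (hl : 0 < lam) :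
    MonotoneOn (fun x : ℝ => (lam + x) * (Real.log x - Real.log (lam + x)))
      (Set.Ioi (0 : ℝ)) := by
  have hint : interior (Set.Ioi (0 : ℝ)) = Set.Ioi 0 := interior_Ioi
  apply monotoneOn_of_deriv_nonneg (convex_Ioi 0)
  · apply ContinuousOn.mul
    · exact (continuous_const.add continuous_id).continuousOn
    · apply ContinuousOn.sub
      · exact fun x hx => (Real.continuousAt_log (ne_of_gt (Set.mem_Ioi.mp hx))).continuousWithinAt
      · intro x hx
        have hx' : 0 < x := Set.mem_Ioi.mp hx
        exact ((Real.continuousAt_log (by positivity : lam + x ≠ 0)).comp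
          (continuous_const.add continuous_id).continuousAt).continuousWithinAt
  · rw [hint]
    intro x hx
    exact (g_hasDeriv lam hx (by simp at hx; positivity)).differentiableAt.differentiableWithinAt
  · rw [hint]
    intro x hx
    simp only [Set.mem_Ioi] at hx
    have hlx : 0 < lam + x := by positivity
    rw [(g_hasDeriv lam hx hlx).deriv]
    have hlog : Real.log (lam + x) - Real.log x ≤ lam / x := by
      have h := Real.log_le_sub_one_of_pos (x := (lam + x) / x) (by positivity)
      rw [Real.log_div hlx.ne' hx.ne'] at h
      have : (lam + x) / x - 1 = lam / x := by field_simp; ring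
      linarith [this ▸ h]
    have : (lam + x) * (1 / x - 1 / (lam + x)) = lam / x := by field_simp; ring
    rw [this]
    linarith

/-- Let `T(λ, ξ) := (ξ²/(λ + ξ²))^(λ + ξ²) · e^λ` for `λ > 0`, `ξ > 0`. Then
`0 < T(λ, ξ) ≤ 1`, and `T(λ, ξ)` is monotonically increasing in `ξ` for fixed `λ`. -/
theorem T_bound_properties
    (T : ℝ → ℝ → ℝ)
    (hT : ∀ lam ξ : ℝ, T lam ξ = (ξ ^ 2 / (lam + ξ ^ 2)) ^ (lam + ξ ^ 2) * Real.exp lam) :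
    (∀ lam ξ : ℝ, 0 < lam → 0 < ξ → 0 < T lam ξ ∧ T lam ξ ≤ 1) ∧
    (∀ lam : ℝ, 0 < lam → ∀ ξ₁ ξ₂ : ℝ, 0 < ξ₁ → ξ₁ ≤ ξ₂ → T lam ξ₁ ≤ T lam ξ₂) := by
  have key : ∀ lam ξ : ℝ, 0 < lam → 0 < ξ →
      T lam ξ = Real.exp ((lam + ξ ^ 2) * (Real.log (ξ ^ 2) - Real.log (lam + ξ ^ 2)) + lam) := by
    intro lam ξ hl hξ
    have hb : (0 : ℝ) < ξ ^ 2 / (lam + ξ ^ 2) := by positivity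
    rw [hT, Real.rpow_def_of_pos hb, ← Real.exp_add,
      Real.log_div (by positivity) (by positivity)]
    ring_nf
  constructor
  · intro lam ξ hl hξ
    rw [key lam ξ hl hξ]
    refine ⟨Real.exp_pos _, ?_⟩
    rw [← Real.exp_zero]
    apply Real.exp_le_exp.mpr
    -- need (lam+ξ²)(log ξ² - log(lam+ξ²)) + lam ≤ 0
    have hx : (0:ℝ) < ξ ^ 2 := by positivity
    have hlx : (0:ℝ) < lam + ξ ^ 2 := by positivity
    have h := Real.log_le_sub_one_of_pos (x := ξ ^ 2 / (lam + ξ ^ 2)) (by positivity)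
    rw [Real.log_div hx.ne' hlx.ne'] at h
    have h2 : ξ ^ 2 / (lam + ξ ^ 2) - 1 = -(lam / (lam + ξ ^ 2)) := by field_simp; ring
    rw [h2] at h
    have h3 : (lam + ξ ^ 2) * (Real.log (ξ ^ 2) - Real.log (lam + ξ ^ 2)) ≤
        (lam + ξ ^ 2) * (-(lam / (lam + ξ ^ 2))) :=
      mul_le_mul_of_nonneg_left h hlx.le
    have h4 : (lam + ξ ^ 2) * (-(lam / (lam + ξ ^ 2))) = -lam := by field_simp
    linarith
  · intro lam hl ξ₁ ξ₂ h1 h12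
    have h2 : 0 < ξ₂ := lt_of_lt_of_le h1 h12
    rw [key lam ξ₁ hl h1, key lam ξ₂ hl h2]
    apply Real.exp_le_exp.mpr
    have := g_mono lam hl (Set.mem_Ioi.mpr (by positivity : (0:ℝ) < ξ₁ ^ 2))
      (Set.mem_Ioi.mpr (by positivity : (0:ℝ) < ξ₂ ^ 2))
      (by nlinarith : ξ₁ ^ 2 ≤ ξ₂ ^ 2)
    simpa using add_le_add_right this lam
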